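/- Let H : X → ℝ satisfy |H(t)| ≥ h₀ > 0 for all collocation points t, and suppose the kernel satisfies |E(t,τ)| ≤ C(t−τ)^{α−1} with 0 < α ≤ 1. Then there exists k_α > 0 such that whenever the maximum step size Δt < k_α, the 2×2 matrix Hⁿ − Bⁿ of the collocation scheme is invertible for every n, where Hⁿ = diag(H(t_{n,1}), H(t_{n,2})) and Bⁿ has entries a_{n,s}(t_{n,j}) = ∫_{t_{n−1}}^{min(t_{n,j},t_n)} E(t_{n,j},τ) L_{n,s}(τ) dτ, L_{n,s} being the local Lagrange basis polynomials. -/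

import Mathlib

open Real intervalIntegral MeasureTheory

lemma integral_kernel_bound (α C Λ p q : ℝ) (hα : 0 < α) (hC : 0 ≤ C) (hΛ : 0 ≤ Λ)
    (hpq : p < q) (E L : ℝ → ℝ)
    (hE : ∀ u, u < q → |E u| ≤ C * (q - u) ^ (α - 1))
    (hL : ∀ τ ∈ Set.Ioo p q, |L τ| ≤ Λ) :
    |∫ τ in p..q, E τ * L τ| ≤ C * Λ * (q - p) ^ α / α := by
  have hint : IntervalIntegrable (fun τ => C * Λ * (q - τ) ^ (α - 1)) volume p q := by
    have h1 : IntervalIntegrable (fun x : ℝ => x ^ (α - 1)) volume (q - p) (q - q) :=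
      intervalIntegrable_rpow' (by linarith)
    have h2 := h1.comp_sub_left q
    simp only [sub_sub_cancel] at h2
    exact h2.const_mul _
  have hval : (∫ τ in p..q, C * Λ * (q - τ) ^ (α - 1)) = C * Λ * (q - p) ^ α / α := by
    rw [intervalIntegral.integral_const_mul]
    rw [intervalIntegral.integral_comp_sub_left (fun x : ℝ => x ^ (α - 1)) q]
    rw [sub_self]
    rw [integral_rpow (Or.inl (by linarith))]
    rw [Real.zero_rpow (by linarith : α - 1 + 1 ≠ 0)]
    rw [sub_add_cancel]
    ring
  have hae : ∀ᵐ τ ∂(volume.restrict (Set.uIoc p q)),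
      ‖E τ * L τ‖ ≤ C * Λ * (q - τ) ^ (α - 1) := by
    have h1 : ∀ᵐ τ ∂(volume.restrict (Set.uIoc p q)), τ ∈ Set.uIoc p q :=
      ae_restrict_mem measurableSet_uIoc
    have h2 : ∀ᵐ τ ∂(volume.restrict (Set.uIoc p q)), τ ≠ q := by
      refine ae_restrict_of_ae ?_
      rw [MeasureTheory.ae_iff]
      simpa using Real.volume_singleton (a := q)
    filter_upwards [h1, h2] with τ hmem hne
    rw [Set.uIoc_of_le hpq.le] at hmem
    have hτq : τ < q := lt_of_le_of_ne hmem.2 hne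
    have hτIoo : τ ∈ Set.Ioo p q := ⟨hmem.1, hτq⟩
    have hEb := hE τ hτq
    have hLb := hL τ hτIoo
    have hrn : (0:ℝ) ≤ C * (q - τ) ^ (α - 1) :=
      mul_nonneg hC (Real.rpow_nonneg (by linarith) _)
    calc ‖E τ * L τ‖ = |E τ| * |L τ| := by rw [Real.norm_eq_abs, abs_mul]
      _ ≤ (C * (q - τ) ^ (α - 1)) * Λ :=
          mul_le_mul hEb hLb (abs_nonneg _) hrn
      _ = C * Λ * (q - τ) ^ (α - 1) := by ring
  have := intervalIntegral.norm_integral_le_abs_of_norm_le hae hint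
  rw [hval] at this
  calc |∫ τ in p..q, E τ * L τ| = ‖∫ τ in p..q, E τ * L τ‖ := (Real.norm_eq_abs _).symm
    _ ≤ |C * Λ * (q - p) ^ α / α| := this
    _ = C * Λ * (q - p) ^ α / α := abs_of_nonneg (by
        have : (0:ℝ) ≤ (q - p) ^ α := Real.rpow_nonneg (by linarith) _
        positivity)

theorem collocation_matrix_invertible (α C h₀ ξ₁ ξ₂ : ℝ)
    (hα : 0 < α) (hα1 : α ≤ 1) (hC : 0 < C) (hh₀ : 0 < h₀)
    (hξ₁ : 0 < ξ₁) (hξ₁₂ : ξ₁ < ξ₂) (hξ₂ : ξ₂ < 1) :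
    ∃ kα > 0, ∀ (N : ℕ) (t : ℕ → ℝ) (H : ℝ → ℝ) (E : ℝ → ℝ → ℝ),
      t 0 = 0 → StrictMonoOn t (Set.Iic N) →
      (∀ s u : ℝ, u < s → |E s u| ≤ C * (s - u) ^ (α - 1)) →
      ∀ n : ℕ, 1 ≤ n → n ≤ N →
        -- collocation points of the n-th interval
        let tc : Fin 2 → ℝ :=
          fun j => t (n - 1) + (if j = 0 then ξ₁ else ξ₂) * (t n - t (n - 1))
        -- local Lagrange basis polynomials
        let L : Fin 2 → ℝ → ℝ :=
          fun s τ => if s = 0 then (tc 1 - τ) / (tc 1 - tc 0) else (τ - tc 0) / (tc 1 - tc 0)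
        -- entries of the matrix Bⁿ
        let a : Fin 2 → Fin 2 → ℝ :=
          fun s j => ∫ τ in t (n - 1)..(min (tc j) (t n)), E (tc j) τ * L s τ
        (∀ j : Fin 2, h₀ ≤ |H (tc j)|) →
        t n - t (n - 1) < kα →
        (Matrix.of fun j s : Fin 2 => (if j = s then H (tc j) else 0) - a s j).det ≠ 0 := by
  have hΛ : 0 < ξ₂ / (ξ₂ - ξ₁) := by
    apply div_pos (by linarith) (by linarith)
  set Λ := ξ₂ / (ξ₂ - ξ₁) with hΛdef
  set K := C * Λ / α with hKdef
  have hK : 0 < K := by positivity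
  refine ⟨(h₀ / (3 * K)) ^ (α⁻¹), Real.rpow_pos_of_pos (by positivity) _, ?_⟩
  intro N t H E ht0 hmono hE n hn1 hnN tc L a hH hsmall
  have hnn : n - 1 < n := Nat.sub_lt (by omega) one_pos
  have hplt : t (n - 1) < t n :=
    hmono (Set.mem_Iic.mpr (le_trans (Nat.sub_le n 1) hnN)) (Set.mem_Iic.mpr hnN) hnn
  set p := t (n - 1) with hp
  set Δ : ℝ := t n - t (n - 1) with hΔ
  have hΔpos : 0 < Δ := by simp [hΔ]; linarith
  -- the step size bound
  have hΔα : K * Δ ^ α < h₀ / 3 := by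
    have h1 : Δ ^ α < ((h₀ / (3 * K)) ^ (α⁻¹)) ^ α :=
      Real.rpow_lt_rpow hΔpos.le hsmall hα
    rw [Real.rpow_inv_rpow (by positivity) hα.ne'] at h1
    calc K * Δ ^ α < K * (h₀ / (3 * K)) := by exact (mul_lt_mul_iff_right₀ hK).mpr h1
      _ = h₀ / 3 := by field_simp
  have htc : ∀ j : Fin 2, tc j = p + (if j = 0 then ξ₁ else ξ₂) * Δ := fun _ => rfl
  have htc0 : tc 0 = p + ξ₁ * Δ := by rw [htc 0]; norm_num
  have htc1 : tc 1 = p + ξ₂ * Δ := by rw [htc 1]; norm_num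
  have hD : tc 1 - tc 0 = (ξ₂ - ξ₁) * Δ := by rw [htc0, htc1]; ring
  have hDpos : 0 < tc 1 - tc 0 := by rw [hD]; exact mul_pos (by linarith) hΔpos
  -- bound on every entry of B
  have habs : ∀ s j : Fin 2, |a s j| < h₀ / 3 := by
    intro s j
    set ξj : ℝ := if j = 0 then ξ₁ else ξ₂ with hξj
    have hξjpos : 0 < ξj := by rw [hξj]; split <;> [exact hξ₁; linarith]
    have hξjlt : ξj < 1 := by rw [hξj]; split <;> linarith
    have hξjle : ξj ≤ ξ₂ := by rw [hξj]; split <;> linarith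
    have hq : tc j = p + ξj * Δ := htc j
    have hξΔ : 0 < ξj * Δ := mul_pos hξjpos hΔpos
    have hξΔ1 : ξj * Δ ≤ 1 * Δ := mul_le_mul_of_nonneg_right hξjlt.le hΔpos.le
    have hξΔ2 : ξj * Δ ≤ ξ₂ * Δ := mul_le_mul_of_nonneg_right hξjle hΔpos.le
    have hpq : p < tc j := by rw [hq]; linarith
    have hqtn : tc j ≤ t n := by rw [hq]; simp only [hΔ] at hξΔ1 ⊢; linarith
    have hmin : min (tc j) (t n) = tc j := min_eq_left hqtn
    have haeq : a s j = ∫ τ in p..(tc j), E (tc j) τ * L s τ := by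
      show (∫ τ in p..(min (tc j) (t n)), E (tc j) τ * L s τ) = _
      rw [hmin]
    have hLb : ∀ τ ∈ Set.Ioo p (tc j), |L s τ| ≤ Λ := by
      intro τ hτ
      have hτ1 : p < τ := hτ.1
      have hτ2 : τ < tc j := hτ.2
      have hτtc1 : τ < tc 1 := by
        rw [htc1]; rw [hq] at hτ2; linarith
      have hΛeq : Λ = (ξ₂ * Δ) / ((ξ₂ - ξ₁) * Δ) := by
        rw [hΛdef, mul_div_mul_right _ _ hΔpos.ne']
      have hLs : L s τ = if s = 0 then (tc 1 - τ) / (tc 1 - tc 0) else (τ - tc 0) / (tc 1 - tc 0) :=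
        rfl
      rw [hLs]
      split
      · rw [abs_div, abs_of_pos hDpos, abs_of_nonneg (by linarith), hΛeq, hD]
        refine (div_le_div_iff_of_pos_right (mul_pos (by linarith) hΔpos)).mpr ?_
        rw [htc1]; linarith
      · rw [abs_div, abs_of_pos hDpos, hΛeq, hD]
        refine (div_le_div_iff_of_pos_right (mul_pos (by linarith) hΔpos)).mpr ?_
        have hm1 : 0 < (ξ₂ - ξ₁) * Δ := mul_pos (by linarith) hΔpos
        have hm2 : 0 ≤ ξ₁ * Δ := mul_nonneg hξ₁.le hΔpos.le
        have hτtc1' : τ < p + ξ₂ * Δ := by rw [← htc1]; exact hτtc1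
        rw [abs_le]; constructor
        · rw [htc0]; linarith
        · rw [htc0]; linarith
    have hEb : ∀ u, u < tc j → |E (tc j) u| ≤ C * (tc j - u) ^ (α - 1) :=
      fun u hu => hE (tc j) u hu
    have hbound := integral_kernel_bound α C Λ p (tc j) hα hC.le hΛ.le hpq
      (E (tc j)) (L s) hEb hLb
    rw [← haeq] at hbound
    have hdle : (tc j - p) ^ α ≤ Δ ^ α := by
      apply Real.rpow_le_rpow (by linarith) ?_ hα.le
      rw [hq]; linarith
    calc |a s j| ≤ C * Λ * (tc j - p) ^ α / α := hbound
      _ ≤ C * Λ * Δ ^ α / α := by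
          refine (div_le_div_iff_of_pos_right hα).mpr ?_
          exact mul_le_mul_of_nonneg_left hdle (mul_nonneg hC.le hΛ.le)
      _ = K * Δ ^ α := by rw [hKdef]; ring
      _ < h₀ / 3 := hΔα
  -- conclude via the determinant formula
  have hdet : (Matrix.of fun j s : Fin 2 => (if j = s then H (tc j) else 0) - a s j).det
      = (H (tc 0) - a 0 0) * (H (tc 1) - a 1 1) - a 1 0 * a 0 1 := by
    rw [Matrix.det_fin_two]
    simp only [Matrix.of_apply]
    norm_num
  rw [hdet]
  have hx : 2 / 3 * h₀ < |H (tc 0) - a 0 0| := by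
    have h1 := hH 0
    have h2 := habs 0 0
    have := abs_sub_abs_le_abs_sub (H (tc 0)) (a 0 0)
    linarith
  have hy : 2 / 3 * h₀ < |H (tc 1) - a 1 1| := by
    have h1 := hH 1
    have h2 := habs 1 1
    have := abs_sub_abs_le_abs_sub (H (tc 1)) (a 1 1)
    linarith
  have hprod : |a 1 0 * a 0 1| < |(H (tc 0) - a 0 0) * (H (tc 1) - a 1 1)| := by
    rw [abs_mul, abs_mul]
    have h1 := habs 1 0
    have h2 := habs 0 1
    have n1 := abs_nonneg (a 1 0)
    have n2 := abs_nonneg (a 0 1)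
    nlinarith
  intro hcontra
  rw [sub_eq_zero] at hcontra
  rw [hcontra] at hprod
  exact lt_irrefl _ hprod
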